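/- Let C > 0 and Delta > 0, and define f(theta) = theta^{-2} * (1 + C*(1-theta)^{-Delta})^2 for theta in (0,1). Then f attains its minimum over (0,1), and every minimizer theta* satisfies 1/(1+Delta) <= theta* <= (1+C)/(1 + C + C*Delta). -/

import Mathlib

open Set


/-- Constrained-`h₀` splitting: `f(θ) = θ⁻² (1 + C (1-θ)^{-Δ})²` attains its
minimum on `(0,1)`, and every minimizer `θ*` satisfies
`1/(1+Δ) ≤ θ* ≤ (1+C)/(1+C+CΔ)`. -/
theorem mlmc_constrained_splitting_bounds (C Δ : ℝ) (hC : 0 < C) (hΔ : 0 < Δ)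
    (f : ℝ → ℝ)
    (hf : ∀ θ : ℝ, f θ = θ ^ (-2 : ℝ) * (1 + C * (1 - θ) ^ (-Δ)) ^ 2) :
    (∃ θ ∈ Set.Ioo (0 : ℝ) 1, ∀ θ' ∈ Set.Ioo (0 : ℝ) 1, f θ ≤ f θ') ∧
    (∀ θ ∈ Set.Ioo (0 : ℝ) 1, (∀ θ' ∈ Set.Ioo (0 : ℝ) 1, f θ ≤ f θ') →
      1 / (1 + Δ) ≤ θ ∧ θ ≤ (1 + C) / (1 + C + C * Δ)) := by
  have hfF : f = fun θ : ℝ => θ ^ (-2 : ℝ) * (1 + C * (1 - θ) ^ (-Δ)) ^ 2 := funext hf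
  subst hfF
  set F : ℝ → ℝ := fun θ : ℝ => θ ^ (-2 : ℝ) * (1 + C * (1 - θ) ^ (-Δ)) ^ 2 with hF
  set a : ℝ := 1 / (1 + Δ) with ha
  set b : ℝ := (1 + C) / (1 + C + C * Δ) with hb
  have hΔ1 : (0:ℝ) < 1 + Δ := by linarith
  have hbden : (0:ℝ) < 1 + C + C * Δ := by nlinarith
  have ha0 : 0 < a := by positivity
  have ha1 : a < 1 := by rw [ha, div_lt_one hΔ1]; linarith
  have hb0 : 0 < b := by positivity
  have hb1 : b < 1 := by rw [hb, div_lt_one hbden]; nlinarith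
  have hab : a ≤ b := by
    rw [ha, hb, div_le_div_iff₀ hΔ1 hbden]; nlinarith
  -- derivative
  have hder : ∀ θ ∈ Ioo (0:ℝ) 1, HasDerivAt F
      (2 * θ ^ (-3 : ℝ) * (1 + C * (1 - θ) ^ (-Δ)) *
        (θ * (C * Δ * (1 - θ) ^ (-Δ - 1)) - (1 + C * (1 - θ) ^ (-Δ)))) θ := by
    intro θ hθ
    obtain ⟨h0, h1⟩ := hθ
    have h1θ : (0:ℝ) < 1 - θ := by linarith
    have A : HasDerivAt (fun x : ℝ => x ^ (-2 : ℝ)) (1 * (-2) * θ ^ ((-2:ℝ) - 1)) θ :=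
      (hasDerivAt_id θ).rpow_const (Or.inl h0.ne')
    have B0 : HasDerivAt (fun x : ℝ => 1 - x) (-1 : ℝ) θ := by
      simpa using (hasDerivAt_id θ).const_sub (1:ℝ)
    have B : HasDerivAt (fun x : ℝ => (1 - x) ^ (-Δ)) ((-1) * (-Δ) * (1 - θ) ^ (-Δ - 1)) θ :=
      B0.rpow_const (Or.inl h1θ.ne')
    have G : HasDerivAt (fun x : ℝ => 1 + C * (1 - x) ^ (-Δ))
        (C * ((-1) * (-Δ) * (1 - θ) ^ (-Δ - 1))) θ := (B.const_mul C).const_add 1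
    have S : HasDerivAt (fun x : ℝ => (1 + C * (1 - x) ^ (-Δ)) ^ 2)
        (2 * (1 + C * (1 - θ) ^ (-Δ)) ^ 1 * (C * ((-1) * (-Δ) * (1 - θ) ^ (-Δ - 1)))) θ := by
      simpa using G.fun_pow 2
    have P := A.fun_mul S
    refine P.congr_deriv ?_
    have e1 : θ ^ ((-2:ℝ) - 1) = θ ^ (-3 : ℝ) := by norm_num
    have e2 : θ ^ (-2 : ℝ) = θ ^ (-3 : ℝ) * θ := by
      rw [show (-2:ℝ) = -3 + 1 by norm_num, Real.rpow_add h0, Real.rpow_one]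
    rw [e1, e2]
    ring
  have hderiv : ∀ θ ∈ Ioo (0:ℝ) 1, deriv F θ =
      2 * θ ^ (-3 : ℝ) * (1 + C * (1 - θ) ^ (-Δ)) *
        (θ * (C * Δ * (1 - θ) ^ (-Δ - 1)) - (1 + C * (1 - θ) ^ (-Δ))) :=
    fun θ hθ => (hder θ hθ).deriv
  have hgpos : ∀ θ : ℝ, θ < 1 → 0 < 1 + C * (1 - θ) ^ (-Δ) := by
    intro θ h1
    have : 0 < (1 - θ) ^ (-Δ) := Real.rpow_pos_of_pos (by linarith) _
    nlinarith
  have hsplit : ∀ θ : ℝ, 0 < θ → θ < 1 →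
      (1 - θ) * (1 - θ) ^ (-Δ - 1) = (1 - θ) ^ (-Δ) := by
    intro θ h0 h1
    have h1θ : (0:ℝ) < 1 - θ := by linarith
    rw [show (-Δ - 1:ℝ) = -Δ - 1 from rfl, Real.rpow_sub h1θ, Real.rpow_one]
    field_simp
  -- deriv negative on Ioo 0 a
  have hneg : ∀ θ ∈ Ioo (0:ℝ) 1, θ ≤ a → deriv F θ < 0 := by
    intro θ hθ hle
    obtain ⟨h0, h1⟩ := hθ
    rw [hderiv θ ⟨h0, h1⟩]
    have h1θ : (0:ℝ) < 1 - θ := by linarith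
    have hw : 0 < (1 - θ) ^ (-Δ - 1) := Real.rpow_pos_of_pos h1θ _
    have hu : 0 < (1 - θ) ^ (-Δ) := Real.rpow_pos_of_pos h1θ _
    have hP : 0 < θ ^ (-3 : ℝ) := Real.rpow_pos_of_pos h0 _
    have hg := hgpos θ h1
    have hθΔ : θ * Δ ≤ 1 - θ := by
      rw [ha, le_div_iff₀ hΔ1] at hle; nlinarith
    have key : θ * (C * Δ * (1 - θ) ^ (-Δ - 1)) - (1 + C * (1 - θ) ^ (-Δ)) < 0 := by
      have h2 : θ * (C * Δ * (1 - θ) ^ (-Δ - 1)) ≤ C * ((1 - θ) * (1 - θ) ^ (-Δ - 1)) :=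
        calc θ * (C * Δ * (1 - θ) ^ (-Δ - 1)) = C * (1 - θ) ^ (-Δ - 1) * (θ * Δ) := by ring
          _ ≤ C * (1 - θ) ^ (-Δ - 1) * (1 - θ) := by
              exact mul_le_mul_of_nonneg_left hθΔ (le_of_lt (mul_pos hC hw))
          _ = C * ((1 - θ) * (1 - θ) ^ (-Δ - 1)) := by ring
      rw [hsplit θ h0 h1] at h2
      linarith
    exact mul_neg_of_pos_of_neg (by positivity) key
  have hpos : ∀ θ ∈ Ioo (0:ℝ) 1, b ≤ θ → 0 < deriv F θ := by
    intro θ hθ hle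
    obtain ⟨h0, h1⟩ := hθ
    rw [hderiv θ ⟨h0, h1⟩]
    have h1θ : (0:ℝ) < 1 - θ := by linarith
    have hw : 0 < (1 - θ) ^ (-Δ - 1) := Real.rpow_pos_of_pos h1θ _
    have hu1 : 1 < (1 - θ) ^ (-Δ) :=
      (Real.one_lt_rpow_iff_of_pos h1θ).mpr (Or.inr ⟨by linarith, by linarith⟩)
    have hP : 0 < θ ^ (-3 : ℝ) := Real.rpow_pos_of_pos h0 _
    have hg := hgpos θ h1
    have hθΔ : (1 + C) * (1 - θ) ≤ θ * (C * Δ) := by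
      rw [hb, div_le_iff₀ hbden] at hle; nlinarith
    have key : 0 < θ * (C * Δ * (1 - θ) ^ (-Δ - 1)) - (1 + C * (1 - θ) ^ (-Δ)) := by
      have h2 : (1 + C) * ((1 - θ) * (1 - θ) ^ (-Δ - 1)) ≤ θ * (C * Δ * (1 - θ) ^ (-Δ - 1)) :=
        calc (1 + C) * ((1 - θ) * (1 - θ) ^ (-Δ - 1)) = (1 - θ) ^ (-Δ - 1) * ((1 + C) * (1 - θ)) := by ring
          _ ≤ (1 - θ) ^ (-Δ - 1) * (θ * (C * Δ)) := mul_le_mul_of_nonneg_left hθΔ hw.le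
          _ = θ * (C * Δ * (1 - θ) ^ (-Δ - 1)) := by ring
      rw [hsplit θ h0 h1] at h2
      nlinarith
    exact mul_pos (by positivity) key
  -- continuity on Ioo 0 1
  have hcont : ContinuousOn F (Ioo (0:ℝ) 1) := by
    apply ContinuousOn.mul
    · exact fun θ hθ => ((Real.continuousAt_rpow_const θ (-2) (Or.inl hθ.1.ne')).continuousWithinAt)
    · apply ContinuousOn.pow
      apply ContinuousOn.add continuousOn_const
      apply ContinuousOn.mul continuousOn_const
      exact fun θ hθ => ((Real.continuousAt_rpow_const _ (-Δ)
        (Or.inl (by linarith [hθ.2] : (1:ℝ) - θ ≠ 0))).comp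
        (continuous_const.sub continuous_id).continuousAt).continuousWithinAt
  have hIocss : Ioc (0:ℝ) a ⊆ Ioo (0:ℝ) 1 := fun x hx => ⟨hx.1, lt_of_le_of_lt hx.2 ha1⟩
  have hIcoss : Ico b (1:ℝ) ⊆ Ioo (0:ℝ) 1 := fun x hx => ⟨lt_of_lt_of_le hb0 hx.1, hx.2⟩
  have hanti : StrictAntiOn F (Ioc (0:ℝ) a) := by
    apply strictAntiOn_of_deriv_neg (convex_Ioc 0 a) (hcont.mono hIocss)
    intro x hx
    rw [interior_Ioc] at hx
    exact hneg x ⟨hx.1, lt_of_lt_of_le hx.2 ha1.le⟩ hx.2.le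
  have hmono : StrictMonoOn F (Ico b (1:ℝ)) := by
    apply strictMonoOn_of_deriv_pos (convex_Ico b 1) (hcont.mono hIcoss)
    intro x hx
    rw [interior_Ico] at hx
    exact hpos x ⟨lt_trans hb0 hx.1, hx.2⟩ hx.1.le
  have hIccss : Icc a b ⊆ Ioo (0:ℝ) 1 := fun x hx => ⟨lt_of_lt_of_le ha0 hx.1, lt_of_le_of_lt hx.2 hb1⟩
  obtain ⟨θ₀, hθ₀mem, hθ₀min⟩ := (isCompact_Icc).exists_isMinOn (nonempty_Icc.mpr hab)
    (hcont.mono hIccss)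
  have haI : a ∈ Icc a b := ⟨le_refl a, hab⟩
  have hbI : b ∈ Icc a b := ⟨hab, le_refl b⟩
  have hglobal : ∀ θ' ∈ Ioo (0:ℝ) 1, F θ₀ ≤ F θ' := by
    intro θ' hθ'
    rcases lt_or_ge θ' a with h | h
    · have := hanti ⟨hθ'.1, h.le⟩ ⟨ha0, le_refl a⟩ h
      exact le_of_lt (lt_of_le_of_lt (hθ₀min haI) this)
    rcases le_or_gt θ' b with h2 | h2
    · exact hθ₀min ⟨h, h2⟩
    · have := hmono ⟨le_refl b, hb1⟩ ⟨h2.le, hθ'.2⟩ h2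
      exact le_of_lt (lt_of_le_of_lt (hθ₀min hbI) this)
  refine ⟨⟨θ₀, hIccss hθ₀mem, hglobal⟩, ?_⟩
  intro θ hθ hmin
  constructor
  · by_contra h
    push_neg at h
    have h1 : F a < F θ := hanti ⟨hθ.1, h.le⟩ ⟨ha0, le_refl a⟩ h
    have h2 : F θ ≤ F a := hmin a ⟨ha0, ha1⟩
    linarith
  · by_contra h
    push_neg at h
    have h1 : F b < F θ := hmono ⟨le_refl b, hb1⟩ ⟨h.le, hθ.2⟩ h
    have h2 : F θ ≤ F b := hmin b ⟨hb0, hb1⟩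
    linarith
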